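/- arXiv:2110.10362 — 2 statements merged into one kernel-verified Lean document; each statement's English description precedes it below -/
import Mathlib

section
/- Let $w : [0,\infty) \to [0,\infty)$ be absolutely continuous and satisfy $w'(t) \le (b - \mu \chi_{R(t)}(x_0)) w(t)$ pointwise, where $R(t)$ is the sweeping arc of the previous setup (width $\delta$, speed $c$, period $P = L/c$ on the circle of circumference $L$), $x_0$ is any fixed point, and $b, \mu > 0$. If $\mu \delta / L > b$, then $w(nP) \le w(0) \exp\big(-(\mu \delta/c - bP)n\big)$ for all $n \in \mathbb{N}$, and hence $w(t) \to 0$ as $t \to \infty$. -/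
open Real Set Filter

/-- One-sided Grönwall with constant rate on an interval. -/
private lemma gron_aux (w : ℝ → ℝ) {K s t : ℝ} (hs : 0 ≤ s) (hst : s ≤ t)
    (hdiff : ∀ u ≥ (0:ℝ), DifferentiableAt ℝ w u)
    (hK : ∀ u ∈ Set.Icc s t, deriv w u ≤ K * w u) :
    w t ≤ w s * Real.exp (K * (t - s)) := by
  set g : ℝ → ℝ := fun u => w u * Real.exp (-(K * u)) with hg
  have hderiv : ∀ u ≥ (0:ℝ), HasDerivAt g
      (deriv w u * Real.exp (-(K*u)) + w u * (Real.exp (-(K*u)) * (-K))) u := by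
    intro u hu
    have h1 : HasDerivAt (fun v : ℝ => -(K*v)) (-K) u := by
      simpa using ((hasDerivAt_id u).const_mul (-K))
    exact ((hdiff u hu).hasDerivAt).mul h1.exp
  have hanti : AntitoneOn g (Set.Icc s t) := by
    apply antitoneOn_of_deriv_nonpos (convex_Icc s t)
    · intro u hu
      exact ((hderiv u (hs.trans hu.1)).continuousAt).continuousWithinAt
    · intro u hu
      rw [interior_Icc] at hu
      exact ((hderiv u (hs.trans hu.1.le)).differentiableAt).differentiableWithinAt
    · intro u hu
      rw [interior_Icc] at hu
      rw [(hderiv u (hs.trans hu.1.le)).deriv]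
      have hE := Real.exp_pos (-(K*u))
      have := hK u ⟨hu.1.le, hu.2.le⟩
      nlinarith
  have h : w t * Real.exp (-(K*t)) ≤ w s * Real.exp (-(K*s)) :=
    hanti (Set.left_mem_Icc.2 hst) (Set.right_mem_Icc.2 hst) hst
  have h2 := mul_le_mul_of_nonneg_right h (Real.exp_pos (K*t)).le
  calc w t = w t * Real.exp (-(K*t)) * Real.exp (K*t) := by
        rw [mul_assoc, ← Real.exp_add, neg_add_cancel, Real.exp_zero, mul_one]
    _ ≤ w s * Real.exp (-(K*s)) * Real.exp (K*t) := h2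
    _ = w s * Real.exp (K * (t - s)) := by
        rw [mul_assoc, ← Real.exp_add]; congr 1; ring

private lemma chain3 (w : ℝ → ℝ) (hwpos : ∀ t, 0 ≤ w t)
    {s t1 t2 t3 K1 K2 K3 : ℝ}
    (h1 : w t1 ≤ w s * Real.exp (K1*(t1-s)))
    (h2 : w t2 ≤ w t1 * Real.exp (K2*(t2-t1)))
    (h3 : w t3 ≤ w t2 * Real.exp (K3*(t3-t2))) :
    w t3 ≤ w s * Real.exp (K1*(t1-s) + K2*(t2-t1) + K3*(t3-t2)) := by
  calc w t3 ≤ w t2 * Real.exp (K3*(t3-t2)) := h3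
    _ ≤ (w t1 * Real.exp (K2*(t2-t1))) * Real.exp (K3*(t3-t2)) :=
        mul_le_mul_of_nonneg_right h2 (Real.exp_pos _).le
    _ ≤ ((w s * Real.exp (K1*(t1-s))) * Real.exp (K2*(t2-t1))) * Real.exp (K3*(t3-t2)) :=
        mul_le_mul_of_nonneg_right
          (mul_le_mul_of_nonneg_right h1 (Real.exp_pos _).le) (Real.exp_pos _).le
    _ = w s * Real.exp (K1*(t1-s) + K2*(t2-t1) + K3*(t3-t2)) := by
        rw [mul_assoc, mul_assoc, ← Real.exp_add, ← Real.exp_add]; congr 1; ring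

private lemma dist_coe_le (L : ℝ) (x y : ℝ) :
    dist ((x:ℝ):AddCircle L) ((y:ℝ):AddCircle L) ≤ |x - y| := by
  rw [dist_eq_norm, ← AddCircle.coe_sub]
  simpa using QuotientAddGroup.norm_mk_le_norm (S := AddSubgroup.zmultiples L) (m := x - y)

private lemma coe_toIcoMod (L : ℝ) (hL : 0 < L) (a y : ℝ) :
    ((toIcoMod hL a y : ℝ) : AddCircle L) = y := by
  rw [QuotientAddGroup.eq_iff_sub_mem, toIcoMod_sub_self]
  exact AddSubgroup.zsmul_mem_zmultiples L _

private lemma period_step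
    (L c δ b μ : ℝ) (hL : 0 < L) (hc : 0 < c) (hδ : 0 < δ)
    (hδL : δ ≤ L) (hμ : 0 < μ)
    (x₀ : AddCircle L)
    (w : ℝ → ℝ) (hwpos : ∀ t, 0 ≤ w t)
    (hwdiff : ∀ t ≥ (0:ℝ), DifferentiableAt ℝ w t)
    (hw : ∀ t ≥ (0:ℝ), deriv w t ≤
      (b - μ * (if dist x₀ ((c * t : ℝ) : AddCircle L) ≤ δ / 2 then (1:ℝ) else 0)) * w t)
    (a : ℝ) (ha : 0 ≤ a) :
    w (a + L / c) ≤ w a * Real.exp (b * (L / c) - μ * δ / c) := by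
  set P : ℝ := L / c with hPdef
  set r : ℝ := δ / (2*c) with hrdef
  have hP : 0 < P := div_pos hL hc
  have hr : 0 < r := by positivity
  have h2r : 2*r ≤ P := by
    have e : 2 * (δ/(2*c)) = δ / c := by field_simp
    rw [hrdef, hPdef, e]
    gcongr
  have hcP : c * P = L := by rw [hPdef]; field_simp
  have hcr : c * r = δ / 2 := by rw [hrdef]; field_simp
  -- growth bound
  have hgrow : ∀ u ≥ (0:ℝ), deriv w u ≤ b * w u := by
    intro u hu
    refine (hw u hu).trans ?_
    have h0 : (0:ℝ) ≤ (if dist x₀ ((c * u : ℝ) : AddCircle L) ≤ δ / 2 then (1:ℝ) else 0) := by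
      split_ifs <;> norm_num
    nlinarith [mul_nonneg (mul_nonneg hμ.le h0) (hwpos u)]
  -- decay bound near contact centers
  have hdecay : ∀ m : ℝ, ((c*m : ℝ) : AddCircle L) = x₀ →
      ∀ u ≥ (0:ℝ), |u - m| ≤ r → deriv w u ≤ (b - μ) * w u := by
    intro m hm u hu hum
    have hdist : dist x₀ ((c * u : ℝ) : AddCircle L) ≤ δ / 2 := by
      rw [← hm]
      calc dist ((c*m:ℝ):AddCircle L) ((c*u:ℝ):AddCircle L) ≤ |c*m - c*u| :=
            dist_coe_le L _ _
        _ = c * |u - m| := by rw [abs_sub_comm, ← mul_sub, abs_mul, abs_of_pos hc]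
        _ ≤ c * r := by nlinarith
        _ = δ / 2 := hcr
    have := hw u hu
    rw [if_pos hdist, mul_one] at this
    exact this
  -- choose a contact center in [a, a+P)
  obtain ⟨y₀, hy₀⟩ := QuotientAddGroup.mk_surjective x₀
  set m0 : ℝ := toIcoMod hL (c*a) y₀ / c with hm0def
  have hcm0 : c * m0 = toIcoMod hL (c*a) y₀ := by
    rw [hm0def]; field_simp
  have hmem := toIcoMod_mem_Ico hL (c*a) y₀
  have ham0 : a ≤ m0 := by
    have := hmem.1
    rw [← hcm0] at this
    exact le_of_mul_le_mul_left this hc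
  have hm0a : m0 < a + P := by
    have h1 : c * m0 < c * a + L := by rw [hcm0]; exact hmem.2
    have : c * m0 < c * (a + P) := by rw [mul_add, hcP]; linarith
    exact lt_of_mul_lt_mul_left this hc.le
  have hm0coe : ((c*m0 : ℝ) : AddCircle L) = x₀ := by
    rw [hcm0, coe_toIcoMod]; exact hy₀
  have hm0coeP : ((c*(m0+P) : ℝ) : AddCircle L) = x₀ := by
    have : c*(m0+P) = c*m0 + L := by rw [mul_add, hcP]
    rw [this, AddCircle.coe_add_period]; exact hm0coe
  have hm0coeP' : ((c*(m0-P) : ℝ) : AddCircle L) = x₀ := by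
    have : c*m0 = c*(m0-P) + L := by rw [mul_sub, hcP]; ring
    rw [this, AddCircle.coe_add_period] at hm0coe; exact hm0coe
  have hgoal : ∀ S : ℝ, S = b * P - μ * δ / c →
      w (a + P) ≤ w a * Real.exp S → w (a + L / c) ≤ w a * Real.exp (b * (L/c) - μ * δ / c) := by
    intro S hS h
    rw [← hPdef] at *
    rw [hS] at h
    exact h
  by_cases h2 : m0 < a + r
  · -- contact interval straddles the left endpoint
    refine hgoal _ ?_ (chain3 w hwpos
      (s := a) (t1 := m0 + r) (t2 := m0 + P - r) (t3 := a + P)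
      (K1 := b - μ) (K2 := b) (K3 := b - μ) ?_ ?_ ?_)
    · rw [hrdef, hPdef]; field_simp; ring
    · exact gron_aux w ha (by linarith) hwdiff (fun u hu =>
        hdecay m0 hm0coe u (le_trans ha hu.1) (abs_le.2 ⟨by linarith [hu.1], by linarith [hu.2]⟩))
    · exact gron_aux w (by linarith) (by linarith) hwdiff (fun u hu =>
        hgrow u (by linarith [hu.1]))
    · exact gron_aux w (by linarith) (by linarith) hwdiff (fun u hu =>
        hdecay (m0+P) hm0coeP u (by linarith [hu.1])
          (abs_le.2 ⟨by linarith [hu.1], by linarith [hu.2]⟩))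
  · by_cases h3 : a + P < m0 + r
    · -- contact interval straddles the right endpoint
      have hm0ge : a + r ≤ m0 := not_lt.1 h2
      refine hgoal _ ?_ (chain3 w hwpos
        (s := a) (t1 := m0 - P + r) (t2 := m0 - r) (t3 := a + P)
        (K1 := b - μ) (K2 := b) (K3 := b - μ) ?_ ?_ ?_)
      · rw [hrdef, hPdef]; field_simp; ring
      · exact gron_aux w ha (by linarith) hwdiff (fun u hu =>
          hdecay (m0-P) hm0coeP' u (le_trans ha hu.1)
            (abs_le.2 ⟨by linarith [hu.1], by linarith [hu.2]⟩))
      · exact gron_aux w (by linarith) (by linarith) hwdiff (fun u hu =>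
          hgrow u (by linarith [hu.1]))
      · exact gron_aux w (by linarith) (by linarith) hwdiff (fun u hu =>
          hdecay m0 hm0coe u (by linarith [hu.1])
            (abs_le.2 ⟨by linarith [hu.1], by linarith [hu.2]⟩))
    · -- contact interval inside the window
      have hm0ge : a + r ≤ m0 := not_lt.1 h2
      have hm0le : m0 + r ≤ a + P := not_lt.1 h3
      refine hgoal _ ?_ (chain3 w hwpos
        (s := a) (t1 := m0 - r) (t2 := m0 + r) (t3 := a + P)
        (K1 := b) (K2 := b - μ) (K3 := b) ?_ ?_ ?_)
      · rw [hrdef, hPdef]; field_simp; ring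
      · exact gron_aux w ha (by linarith) hwdiff (fun u hu =>
          hgrow u (by linarith [hu.1]))
      · exact gron_aux w (by linarith) (by linarith) hwdiff (fun u hu =>
          hdecay m0 hm0coe u (by linarith [hu.1])
            (abs_le.2 ⟨by linarith [hu.1], by linarith [hu.2]⟩))
      · exact gron_aux w (by linarith) (by linarith) hwdiff (fun u hu =>
          hgrow u (by linarith [hu.1]))

/-- Thin-sweeps convergence: an error satisfying
`w' ≤ (b - μ χ_{R(t)}(x₀)) w` for the sweeping arc `R(t)` of width `δ` and
speed `c` on the circle of circumference `L` decays geometrically along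
sweep periods `P = L/c` when `μ δ / L > b`, hence `w(t) → 0`. -/
theorem thin_sweeps_convergence
    (L c δ b μ : ℝ) (hL : 0 < L) [Fact (0 < L)] (hc : 0 < c) (hδ : 0 < δ)
    (hδL : δ ≤ L) (hb : 0 < b) (hμ : 0 < μ) (hrate : b < μ * δ / L)
    (x₀ : AddCircle L)
    (w : ℝ → ℝ) (hwpos : ∀ t, 0 ≤ w t)
    (hwdiff : ∀ t ≥ (0:ℝ), DifferentiableAt ℝ w t)
    (hw : ∀ t ≥ (0:ℝ), deriv w t ≤
      (b - μ * (if dist x₀ ((c * t : ℝ) : AddCircle L) ≤ δ / 2 then (1:ℝ) else 0))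
        * w t) :
    (∀ n : ℕ, w (n * (L / c)) ≤
        w 0 * Real.exp (-(μ * δ / c - b * (L / c)) * n)) ∧
      Filter.Tendsto w Filter.atTop (nhds 0) := by
  have hP : 0 < L / c := div_pos hL hc
  have step : ∀ a ≥ (0:ℝ), w (a + L/c) ≤ w a * Real.exp (b*(L/c) - μ*δ/c) :=
    fun a ha => period_step L c δ b μ hL hc hδ hδL hμ x₀ w hwpos hwdiff hw a ha
  have hgrow : ∀ u ≥ (0:ℝ), deriv w u ≤ b * w u := by
    intro u hu
    refine (hw u hu).trans ?_
    have h0 : (0:ℝ) ≤ (if dist x₀ ((c * u : ℝ) : AddCircle L) ≤ δ / 2 then (1:ℝ) else 0) := by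
      split_ifs <;> norm_num
    nlinarith [mul_nonneg (mul_nonneg hμ.le h0) (hwpos u)]
  have part1 : ∀ n : ℕ, w (n * (L / c)) ≤
      w 0 * Real.exp (-(μ * δ / c - b * (L / c)) * n) := by
    intro n
    induction n with
    | zero => simp
    | succ n ih =>
      have h1 := step (n*(L/c)) (by positivity)
      have harg : ((n+1:ℕ):ℝ)*(L/c) = n*(L/c) + L/c := by push_cast; ring
      rw [harg]
      calc w (n*(L/c) + L/c) ≤ w (n*(L/c)) * Real.exp (b*(L/c) - μ*δ/c) := h1
        _ ≤ (w 0 * Real.exp (-(μ*δ/c - b*(L/c))*n)) * Real.exp (b*(L/c) - μ*δ/c) :=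
            mul_le_mul_of_nonneg_right ih (Real.exp_pos _).le
        _ = w 0 * Real.exp (-(μ*δ/c - b*(L/c))*((n:ℕ)+1:ℕ)) := by
            rw [mul_assoc, ← Real.exp_add]; congr 1; push_cast; ring
  refine ⟨part1, ?_⟩
  set q : ℝ := -(μ * δ / c - b * (L / c)) with hqdef
  have hbL : b * L < μ * δ := (lt_div_iff₀ hL).mp hrate
  have hq : q < 0 := by
    rw [hqdef]
    have : b * (L/c) < μ * δ / c := by
      rw [mul_div_assoc] at *
      rw [← mul_div_assoc, ← mul_div_assoc]
      exact div_lt_div_of_pos_right hbL hc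
    linarith
  have hbound : ∀ t ≥ (0:ℝ), w t ≤ (w 0 * Real.exp (b*(L/c))) * (Real.exp q)^(⌊t/(L/c)⌋₊) := by
    intro t ht
    set n : ℕ := ⌊t/(L/c)⌋₊ with hn
    have hn1 : (n:ℝ)*(L/c) ≤ t := by
      rw [← le_div_iff₀ hP]
      exact Nat.floor_le (div_nonneg ht hP.le)
    have hn2 : t < ((n:ℝ)+1)*(L/c) := by
      rw [← div_lt_iff₀ hP]
      exact Nat.lt_floor_add_one _
    have g1 : w t ≤ w ((n:ℝ)*(L/c)) * Real.exp (b*(t - (n:ℝ)*(L/c))) :=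
      gron_aux w (by positivity) hn1 hwdiff (fun u hu => hgrow u (le_trans (by positivity) hu.1))
    calc w t ≤ w ((n:ℝ)*(L/c)) * Real.exp (b*(t - (n:ℝ)*(L/c))) := g1
      _ ≤ w ((n:ℝ)*(L/c)) * Real.exp (b*(L/c)) := by
          apply mul_le_mul_of_nonneg_left _ (hwpos _)
          exact Real.exp_le_exp.2 (by nlinarith)
      _ ≤ (w 0 * Real.exp (q*n)) * Real.exp (b*(L/c)) :=
          mul_le_mul_of_nonneg_right (part1 n) (Real.exp_pos _).le
      _ = (w 0 * Real.exp (b*(L/c))) * (Real.exp q)^n := by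
          rw [mul_comm q (n:ℝ), Real.exp_nat_mul]; ring
  have htend : Filter.Tendsto (fun t : ℝ => (w 0 * Real.exp (b*(L/c))) * (Real.exp q)^(⌊t/(L/c)⌋₊))
      Filter.atTop (nhds 0) := by
    have h0 : Filter.Tendsto (fun n : ℕ => (Real.exp q)^n) Filter.atTop (nhds 0) :=
      tendsto_pow_atTop_nhds_zero_of_lt_one (Real.exp_pos q).le
        (Real.exp_lt_one_iff.2 hq)
    have hfloor : Filter.Tendsto (fun t : ℝ => ⌊t/(L/c)⌋₊) Filter.atTop Filter.atTop :=
      tendsto_nat_floor_atTop.comp (Filter.tendsto_id.atTop_div_const hP)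
    have := (h0.comp hfloor).const_mul (w 0 * Real.exp (b*(L/c)))
    simpa using this
  exact squeeze_zero' (Filter.Eventually.of_forall hwpos)
    ((Filter.eventually_ge_atTop (0:ℝ)).mono hbound) htend
end

section
/- Let $A$ be a positive self-adjoint operator on a Hilbert space $H$ with $\langle A w, w \rangle \ge \lambda_1 \|w\|^2$ for all $w$ in its domain (Poincaré inequality), and suppose $w : [0,\infty) \to H$ satisfies the differential inequality $\frac{d}{dt}\tfrac12\|w\|^2 + \nu \langle A w, w\rangle + \mu \|w\|^2 \le \mu \|w - I_h w\| \|w\|$, where $\|w - I_h w\| \le c_0 h \langle A w, w \rangle^{1/2}$. If $\mu c_0^2 h^2 \le \nu$, then $\|w(t)\|^2 \le \|w(0)\|^2 e^{-\mu t}$ for all $t \ge 0$. -/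
open scoped RealInnerProductSpace

/-- Abstract core of the AOT convergence proof: the error energy inequality
with dissipation `ν⟪Aw,w⟫`, nudging `μ‖w‖²`, and interpolation defect bounded
by `c₀ h ⟪Aw,w⟫^{1/2}` gives `‖w(t)‖² ≤ ‖w(0)‖² e^{-μt}` when `μc₀²h² ≤ ν`. -/
theorem aot_abstract_convergence
    {H : Type*} [NormedAddCommGroup H] [InnerProductSpace ℝ H]
    (A Ih : H →ₗ[ℝ] H)
    (hAsym : ∀ x y : H, ⟪A x, y⟫ = ⟪x, A y⟫)
    (lam₁ : ℝ) (hlam₁ : 0 < lam₁)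
    (hApos : ∀ x : H, lam₁ * ‖x‖ ^ 2 ≤ ⟪A x, x⟫)
    (ν μ c₀ h : ℝ) (hν : 0 < ν) (hμ : 0 < μ) (hc₀ : 0 ≤ c₀) (hh : 0 ≤ h)
    (happrox : ∀ x : H, ‖x - Ih x‖ ≤ c₀ * h * Real.sqrt ⟪A x, x⟫)
    (hcond : μ * c₀ ^ 2 * h ^ 2 ≤ ν)
    (w : ℝ → H)
    (hwdiff : ∀ t ≥ (0:ℝ),
      DifferentiableAt ℝ (fun s => (1/2 : ℝ) * ‖w s‖ ^ 2) t)
    (hineq : ∀ t ≥ (0:ℝ),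
      deriv (fun s => (1/2 : ℝ) * ‖w s‖ ^ 2) t
          + ν * ⟪A (w t), w t⟫ + μ * ‖w t‖ ^ 2
        ≤ μ * ‖w t - Ih (w t)‖ * ‖w t‖) :
    ∀ t ≥ (0:ℝ), ‖w t‖ ^ 2 ≤ ‖w 0‖ ^ 2 * Real.exp (-μ * t) := by
  set D : ℝ → ℝ := fun t => deriv (fun s => (1/2 : ℝ) * ‖w s‖ ^ 2) t with hD
  set y : ℝ → ℝ := fun s => ‖w s‖ ^ 2 with hy
  -- derivative of y
  have hyD : ∀ t ≥ (0:ℝ), HasDerivAt y (2 * D t) t := by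
    intro t ht
    have h1 := (hwdiff t ht).hasDerivAt
    have h2 := h1.const_mul (2:ℝ)
    have heq : (fun s => (2:ℝ) * ((1/2:ℝ) * ‖w s‖ ^ 2)) = y := by
      funext s; show (2:ℝ) * ((1/2:ℝ) * ‖w s‖ ^ 2) = ‖w s‖ ^ 2; ring
    rw [heq] at h2
    exact h2
  -- pointwise estimate: 2 D t + μ y t ≤ 0
  have key : ∀ t ≥ (0:ℝ), 2 * D t + μ * y t ≤ 0 := by
    intro t ht
    have ha : (0:ℝ) ≤ ⟪A (w t), w t⟫ :=
      le_trans (by positivity) (hApos (w t))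
    have h1 := hineq t ht
    have h2 : μ * ‖w t - Ih (w t)‖ * ‖w t‖
        ≤ μ * (c₀ * h * Real.sqrt ⟪A (w t), w t⟫) * ‖w t‖ := by
      gcongr
      exact happrox (w t)
    have hsq : Real.sqrt ⟪A (w t), w t⟫ ^ 2 = ⟪A (w t), w t⟫ := Real.sq_sqrt ha
    have young : c₀ * h * Real.sqrt ⟪A (w t), w t⟫ * ‖w t‖
        ≤ (c₀ ^ 2 * h ^ 2 * ⟪A (w t), w t⟫ + ‖w t‖ ^ 2) / 2 := by
      nlinarith [sq_nonneg (c₀ * h * Real.sqrt ⟪A (w t), w t⟫ - ‖w t‖)]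
    have hcond' : μ * c₀ ^ 2 * h ^ 2 * ⟪A (w t), w t⟫ ≤ ν * ⟪A (w t), w t⟫ :=
      mul_le_mul_of_nonneg_right hcond ha
    have hy2 : μ * (c₀ * h * Real.sqrt ⟪A (w t), w t⟫) * ‖w t‖
        ≤ μ * ((c₀ ^ 2 * h ^ 2 * ⟪A (w t), w t⟫ + ‖w t‖ ^ 2) / 2) := by
      have := mul_le_mul_of_nonneg_left young hμ.le
      linarith [this]
    simp only [hy]
    nlinarith [h1, h2, hy2, hcond', mul_nonneg hν.le ha]
  -- F t = y t * exp (μ t) is antitone on [0, ∞)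
  set F : ℝ → ℝ := fun s => y s * Real.exp (μ * s) with hF
  have hFD : ∀ t ≥ (0:ℝ),
      HasDerivAt F ((2 * D t + μ * y t) * Real.exp (μ * t)) t := by
    intro t ht
    have he : HasDerivAt (fun s => Real.exp (μ * s)) (Real.exp (μ * t) * μ) t := by
      simpa using ((hasDerivAt_id t).const_mul μ).exp
    have := (hyD t ht).mul he
    refine this.congr_deriv ?_
    ring
  have hanti : AntitoneOn F (Set.Ici (0:ℝ)) := by
    apply antitoneOn_of_deriv_nonpos (convex_Ici 0)
    · intro t ht
      exact (hFD t ht).continuousAt.continuousWithinAt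
    · intro t ht
      rw [interior_Ici] at ht
      exact (hFD t (le_of_lt ht)).differentiableAt.differentiableWithinAt
    · intro t ht
      rw [interior_Ici] at ht
      rw [(hFD t (le_of_lt ht)).deriv]
      exact mul_nonpos_of_nonpos_of_nonneg (key t (le_of_lt ht)) (Real.exp_pos _).le
  intro t ht
  have hle : F t ≤ F 0 := hanti (Set.self_mem_Ici) ht ht
  have hF0 : F 0 = ‖w 0‖ ^ 2 := by simp [hF, hy]
  have hexp : (0:ℝ) < Real.exp (μ * t) := Real.exp_pos _
  have : y t * Real.exp (μ * t) ≤ ‖w 0‖ ^ 2 := by rw [← hF0]; exact hle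
  have hfin := mul_le_mul_of_nonneg_right this (Real.exp_pos (-(μ * t))).le
  calc ‖w t‖ ^ 2 = y t * Real.exp (μ * t) * Real.exp (-(μ * t)) := by
        rw [mul_assoc, ← Real.exp_add, add_neg_cancel, Real.exp_zero, mul_one]
      _ ≤ ‖w 0‖ ^ 2 * Real.exp (-(μ * t)) := hfin
      _ = ‖w 0‖ ^ 2 * Real.exp (-μ * t) := by rw [neg_mul]
end
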